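/- Let T be a universal first-order theory with a model companion T*. Then T has the ground interpolation property if and only if T* has the ground interpolation property. -/
import Mathlib


open FirstOrder FirstOrder.Language

universe u v w

namespace PaperFOL

variable {L : FirstOrder.Language.{u, v}}

/-- A sentence is universal: the universal closure of a quantifier-free formula. -/
def IsUniversalSentence (φ : L.Sentence) : Prop :=
  ∃ (n : ℕ) (ψ : L.BoundedFormula Empty n), ψ.IsQF ∧ φ = ψ.alls

/-- The universal fragment `T_∀` of a theory `T`: all universal sentences entailed by `T`. -/
def univFragment (T : L.Theory) : L.Theory :=
  {φ | IsUniversalSentence φ ∧ T ⊨ᵇ φ}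

/-- A sentence `φ` is satisfiable w.r.t. `T`: some model of `T` satisfies `φ`. -/
def SatWith (T : L.Theory) (φ : L.Sentence) : Prop :=
  Theory.IsSatisfiable (T ∪ {φ})

/-- `T` allows quantifier elimination. -/
def HasQE (T : L.Theory) : Prop :=
  ∀ {n : ℕ} (φ : L.BoundedFormula Empty n),
    ∃ ψ : L.BoundedFormula Empty n, ψ.IsQF ∧ T ⊨ᵇ φ.iff ψ

/-- Literals: atomic or negated atomic formulas. -/
inductive IsLiteral {n : ℕ} : L.BoundedFormula Empty n → Prop
  | atom {φ : L.BoundedFormula Empty n} : φ.IsAtomic → IsLiteral φ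
  | negAtom {φ : L.BoundedFormula Empty n} : φ.IsAtomic → IsLiteral φ.not

/-- Clauses: disjunctions of literals. -/
inductive IsClauseFormula {n : ℕ} : L.BoundedFormula Empty n → Prop
  | lit {φ : L.BoundedFormula Empty n} : IsLiteral φ → IsClauseFormula φ
  | sup {φ ψ : L.BoundedFormula Empty n} :
      IsClauseFormula φ → IsLiteral ψ → IsClauseFormula (φ ⊔ ψ)

/-- Two theories over the same signature are co-theories iff they have the same
universal consequences. -/
def CoTheories (T₁ T₂ : L.Theory) : Prop :=
  ∀ φ : L.Sentence, IsUniversalSentence φ → (T₁ ⊨ᵇ φ ↔ T₂ ⊨ᵇ φ)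

/-- The lift of an `L`-theory to the language with additional constants from `α`. -/
def liftT (α : Type w) (T : L.Theory) : (L[[α]]).Theory :=
  (L.lhomWithConstants α).onTheory T

/-- A theory is universal if all its axioms are universal sentences. -/
def IsUniversalTheory (T : L.Theory) : Prop :=
  ∀ φ ∈ T, IsUniversalSentence φ

section Interpolation

/-- `I` is a ground interpolant of `A` and `B` w.r.t. `T`, where `A` is a ground formula with
constants among the shared `Fin nc` and own `Fin na`, `B` with shared `Fin nc` and own `Fin nb`,
and `I` only contains the shared constants `Fin nc`. -/
def IsGroundInterpolant (T : L.Theory) {nc na nb : ℕ}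
    (A : (L[[Fin nc ⊕ Fin na]]).Sentence) (B : (L[[Fin nc ⊕ Fin nb]]).Sentence)
    (I : (L[[Fin nc]]).Sentence) : Prop :=
  I.IsQF ∧
    (liftT (Fin nc ⊕ Fin na) T ∪ {A}) ⊨ᵇ
      ((L.lhomWithConstantsMap (Sum.inl : Fin nc → Fin nc ⊕ Fin na)).onSentence I) ∧
    ¬ Theory.IsSatisfiable (liftT (Fin nc ⊕ Fin nb) T ∪
      {B, (L.lhomWithConstantsMap (Sum.inl : Fin nc → Fin nc ⊕ Fin nb)).onSentence I})

/-- `A ∧ B` is unsatisfiable w.r.t. `T` (in the joint language with all constants). -/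
def JointlyUnsat (T : L.Theory) {nc na nb : ℕ}
    (A : (L[[Fin nc ⊕ Fin na]]).Sentence) (B : (L[[Fin nc ⊕ Fin nb]]).Sentence) : Prop :=
  ¬ Theory.IsSatisfiable (liftT (Fin nc ⊕ (Fin na ⊕ Fin nb)) T ∪
      {(L.lhomWithConstantsMap (Sum.map id Sum.inl)).onSentence A,
       (L.lhomWithConstantsMap (Sum.map id Sum.inr)).onSentence B})

/-- `T` has the ground interpolation property. -/
def GroundInterpolation (T : L.Theory) : Prop :=
  ∀ (nc na nb : ℕ) (A : (L[[Fin nc ⊕ Fin na]]).Sentence) (B : (L[[Fin nc ⊕ Fin nb]]).Sentence),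
    A.IsQF → B.IsQF → JointlyUnsat T A B →
    ∃ I : (L[[Fin nc]]).Sentence, IsGroundInterpolant T A B I

end Interpolation

section Amalgamation

/-- `T` has the amalgamation property. -/
def Amalgamation (T : L.Theory) : Prop :=
  ∀ (A M₁ M₂ : Type w) [L.Structure A] [L.Structure M₁] [L.Structure M₂],
    A ⊨ T → M₁ ⊨ T → M₂ ⊨ T →
    ∀ (f₁ : A ↪[L] M₁) (f₂ : A ↪[L] M₂),
      ∃ (N : Theory.ModelType.{u, v, w} T) (g₁ : M₁ ↪[L] N) (g₂ : M₂ ↪[L] N),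
        ∀ a, g₁ (f₁ a) = g₂ (f₂ a)

/-- `T` has the sub-amalgamation property (the common substructure need not be a model). -/
def SubAmalgamation (T : L.Theory) : Prop :=
  ∀ (A M₁ M₂ : Type w) [L.Structure A] [L.Structure M₁] [L.Structure M₂],
    M₁ ⊨ T → M₂ ⊨ T →
    ∀ (f₁ : A ↪[L] M₁) (f₂ : A ↪[L] M₂),
      ∃ (N : Theory.ModelType.{u, v, w} T) (g₁ : M₁ ↪[L] N) (g₂ : M₂ ↪[L] N),
        ∀ a, g₁ (f₁ a) = g₂ (f₂ a)

/-- `T` has the strong sub-amalgamation property. -/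
def StrongSubAmalgamation (T : L.Theory) : Prop :=
  ∀ (A M₁ M₂ : Type w) [L.Structure A] [L.Structure M₁] [L.Structure M₂],
    M₁ ⊨ T → M₂ ⊨ T →
    ∀ (f₁ : A ↪[L] M₁) (f₂ : A ↪[L] M₂),
      ∃ (N : Theory.ModelType.{u, v, w} T) (g₁ : M₁ ↪[L] N) (g₂ : M₂ ↪[L] N),
        (∀ a, g₁ (f₁ a) = g₂ (f₂ a)) ∧
        (∀ m₁ m₂, g₁ m₁ = g₂ m₂ → ∃ a, m₁ = f₁ a ∧ m₂ = f₂ a)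

end Amalgamation

section ModelCompanion

/-- `T` is model complete: every embedding between models of `T` is elementary. -/
def IsModelComplete (T : L.Theory) : Prop :=
  ∀ (M N : Type w) [L.Structure M] [L.Structure N], M ⊨ T → N ⊨ T →
    ∀ (f : M ↪[L] N) (k : ℕ) (φ : L.Formula (Fin k)) (x : Fin k → M),
      φ.Realize (f ∘ x) ↔ φ.Realize x

/-- `T*` is a model companion of `T`. -/
def IsModelCompanion (T Ts : L.Theory) : Prop :=
  CoTheories T Ts ∧ IsModelComplete.{u, v, w} Ts

/-- The diagram of a structure: all literal sentences (with constants for all elements)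
true in the structure. -/
def diagram (A : Type w) [L.Structure A] : (L[[A]]).Theory :=
  {φ : (L[[A]]).Sentence | IsLiteral φ ∧ A ⊨ φ}

/-- `T*` is a model completion of `T`. -/
def IsModelCompletion (T Ts : L.Theory) : Prop :=
  IsModelCompanion.{u, v, w} T Ts ∧
    ∀ (A : Type w) [L.Structure A], A ⊨ T →
      Theory.IsComplete (liftT A Ts ∪ diagram A)

end ModelCompanion

end PaperFOL



namespace PaperFOL
namespace Aux

open FirstOrder FirstOrder.Language

variable {L : FirstOrder.Language.{u, v}}

theorem isQF_mapTermRel {L' : Language} {α β : Type*} {g : ℕ → ℕ}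
    (ft : ∀ n, L.Term (α ⊕ Fin n) → L'.Term (β ⊕ Fin (g n)))
    (fr : ∀ n, L.Relations n → L'.Relations n)
    (h : ∀ n, L'.BoundedFormula β (g (n + 1)) → L'.BoundedFormula β (g n + 1))
    {n} {φ : L.BoundedFormula α n} (hφ : φ.IsQF) :
    (φ.mapTermRel ft fr h).IsQF := by
  induction hφ with
  | falsum => exact BoundedFormula.isQF_bot
  | of_isAtomic h0 =>
      cases h0 with
      | equal t₁ t₂ => exact (BoundedFormula.IsAtomic.equal _ _).isQF
      | rel R ts => exact (BoundedFormula.IsAtomic.rel _ _).isQF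
  | imp h1 h2 ih1 ih2 => exact ih1.imp ih2

theorem isQF_equivSentence_symm {α : Type*} {φ : (L[[α]]).Sentence} (h : φ.IsQF) :
    (Formula.equivSentence.symm φ).IsQF :=
  isQF_mapTermRel _ _ _ (isQF_mapTermRel _ _ _ h)

theorem isQF_onBoundedFormula {L' : Language} (Φ : L →ᴸ L') {α : Type*} {n}
    {φ : L.BoundedFormula α n} (h : φ.IsQF) : (Φ.onBoundedFormula φ).IsQF := by
  induction h with
  | falsum => exact BoundedFormula.isQF_bot
  | of_isAtomic h0 =>
      cases h0 with
      | equal t₁ t₂ => exact (BoundedFormula.IsAtomic.equal _ _).isQF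
      | rel R ts => exact (BoundedFormula.IsAtomic.rel _ _).isQF
  | imp h1 h2 ih1 ih2 => exact ih1.imp ih2

theorem isQF_onSentence {L' : Language} (Φ : L →ᴸ L') {φ : L.Sentence} (h : φ.IsQF) :
    (Φ.onSentence φ).IsQF :=
  isQF_onBoundedFormula Φ h

theorem unsat_iff_models_alls {T' : L.Theory} {n : ℕ} {α : Type} (e : α ≃ Fin n)
    (φ : (L[[α]]).Sentence) :
    ¬ (liftT α T' ∪ {φ}).IsSatisfiable ↔
      T' ⊨ᵇ ((BoundedFormula.relabel (fun a => Sum.inr (e a) : α → Empty ⊕ Fin n)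
          (Formula.equivSentence.symm φ.not) : L.BoundedFormula Empty n).alls) := by
  constructor
  · intro hunsat
    rw [Theory.models_sentence_iff]
    intro M
    rw [Sentence.Realize, BoundedFormula.realize_alls]
    intro xs
    rw [BoundedFormula.realize_relabel, Unique.eq_default (xs ∘ Fin.natAdd n)]
    set w : α → (M : Type _) :=
      (Sum.elim (default : Empty → M) (xs ∘ Fin.castAdd 0)) ∘ (fun a => Sum.inr (e a)) with hw
    have key : (Formula.equivSentence.symm φ.not).Realize w := by
      rw [Formula.realize_equivSentence_symm]
      letI : (constantsOn α).Structure M := constantsOn.structure w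
      rw [Sentence.realize_not]
      intro hcon
      haveI : (M : Type _) ⊨ liftT α T' ∪ {φ} :=
        Theory.model_union_iff.2 ⟨(LHom.onTheory_model _ _).2 M.is_model,
          Theory.model_singleton_iff.2 hcon⟩
      exact hunsat (Theory.Model.isSatisfiable (M : Type _))
    exact key
  · intro hmod
    rintro ⟨N⟩
    letI : L.Structure N := (L.lhomWithConstants α).reduct N
    haveI : (L.lhomWithConstants α).IsExpansionOn N := LHom.isExpansionOn_reduct _ N
    haveI hN : (N : Type _) ⊨ T' :=
      (LHom.onTheory_model _ _).1 (N.is_model.mono Set.subset_union_left)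
    haveI hNφ : (N : Type _) ⊨ φ := by
      have := N.is_model.realize_of_mem (T := liftT α T' ∪ {φ}) φ
        (Set.mem_union_right _ rfl)
      exact this
    have halls := hmod.realize_sentence (N : Type _)
    rw [Sentence.Realize, BoundedFormula.realize_alls] at halls
    have h3 : (Formula.equivSentence.symm φ.not).Realize (fun a => (L.con a : N)) := by
      have h2 := halls (fun i => (L.con (e.symm i) : N))
      rw [BoundedFormula.realize_relabel] at h2
      show BoundedFormula.Realize (Formula.equivSentence.symm φ.not)
        (fun a => (L.con a : N)) default
      convert h2 using 2
      simp [Fin.castAdd, Fin.castLE]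
    rw [Formula.realize_equivSentence_symm_con, Sentence.realize_not] at h3
    exact h3 hNφ

theorem sat_union_congr {T Ts : L.Theory} (h : CoTheories T Ts) {α : Type} [Finite α]
    {φ : (L[[α]]).Sentence} (hφ : φ.IsQF) :
    (liftT α T ∪ {φ}).IsSatisfiable ↔ (liftT α Ts ∪ {φ}).IsSatisfiable := by
  obtain ⟨n, ⟨e⟩⟩ := Finite.exists_equiv_fin α
  have hψ : (BoundedFormula.relabel (fun a => Sum.inr (e a) : α → Empty ⊕ Fin n)
      (Formula.equivSentence.symm φ.not) : L.BoundedFormula Empty n).IsQF :=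
    (isQF_equivSentence_symm hφ.not).relabel _
  have hu : IsUniversalSentence
      ((BoundedFormula.relabel (fun a => Sum.inr (e a) : α → Empty ⊕ Fin n)
        (Formula.equivSentence.symm φ.not) : L.BoundedFormula Empty n).alls) :=
    ⟨n, _, hψ, rfl⟩
  exact not_iff_not.1
    ((unsat_iff_models_alls e φ).trans ((h _ hu).trans (unsat_iff_models_alls e φ).symm))

theorem sat_union_pair_iff {L' : FirstOrder.Language.{u, v}} {S : L'.Theory} {A B : L'.Sentence} :
    (S ∪ {A, B}).IsSatisfiable ↔ (S ∪ {A ⊓ B}).IsSatisfiable := by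
  constructor <;> rintro ⟨M⟩
  · have hm := M.is_model
    simp only [Theory.model_union_iff, Theory.model_insert_iff,
      Theory.model_singleton_iff] at hm
    haveI : (M : Type _) ⊨ S ∪ {A ⊓ B} :=
      Theory.model_union_iff.2 ⟨hm.1, Theory.model_singleton_iff.2
        (Formula.realize_inf.2 ⟨hm.2.1, hm.2.2⟩)⟩
    exact Theory.Model.isSatisfiable (M : Type _)
  · have hm := M.is_model
    simp only [Theory.model_union_iff, Theory.model_singleton_iff] at hm
    have hAB := Formula.realize_inf.1 hm.2
    haveI : (M : Type _) ⊨ S ∪ {A, B} := by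
      simp only [Theory.model_union_iff, Theory.model_insert_iff,
        Theory.model_singleton_iff]
      exact ⟨hm.1, hAB.1, hAB.2⟩
    exact Theory.Model.isSatisfiable (M : Type _)

theorem sat_union_pair_congr {T Ts : L.Theory} (h : CoTheories T Ts) {α : Type} [Finite α]
    {φ ψ : (L[[α]]).Sentence} (hφ : φ.IsQF) (hψ : ψ.IsQF) :
    (liftT α T ∪ {φ, ψ}).IsSatisfiable ↔ (liftT α Ts ∪ {φ, ψ}).IsSatisfiable := by
  rw [sat_union_pair_iff, sat_union_pair_iff]
  exact sat_union_congr h (hφ.inf hψ)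

theorem coTheories_symm {T Ts : L.Theory} (h : CoTheories T Ts) : CoTheories Ts T :=
  fun φ hu => (h φ hu).symm

theorem models_union_singleton_congr {T Ts : L.Theory} (h : CoTheories T Ts) {α : Type}
    [Finite α] {φ ψ : (L[[α]]).Sentence} (hφ : φ.IsQF) (hψ : ψ.IsQF) :
    (liftT α T ∪ {φ}) ⊨ᵇ ψ ↔ (liftT α Ts ∪ {φ}) ⊨ᵇ ψ := by
  rw [Theory.models_iff_not_satisfiable, Theory.models_iff_not_satisfiable]
  simp only [Set.union_assoc, Set.singleton_union]
  exact not_iff_not.2 (sat_union_pair_congr h hφ hψ.not)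

theorem jointlyUnsat_congr {T Ts : L.Theory} (h : CoTheories T Ts) {nc na nb : ℕ}
    {A : (L[[Fin nc ⊕ Fin na]]).Sentence} {B : (L[[Fin nc ⊕ Fin nb]]).Sentence}
    (hA : A.IsQF) (hB : B.IsQF) :
    JointlyUnsat T A B ↔ JointlyUnsat Ts A B :=
  not_iff_not.2 (sat_union_pair_congr h (isQF_onSentence _ hA) (isQF_onSentence _ hB))

theorem isGroundInterpolant_congr {T Ts : L.Theory} (h : CoTheories T Ts) {nc na nb : ℕ}
    {A : (L[[Fin nc ⊕ Fin na]]).Sentence} {B : (L[[Fin nc ⊕ Fin nb]]).Sentence}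
    {I : (L[[Fin nc]]).Sentence} (hA : A.IsQF) (hB : B.IsQF) :
    IsGroundInterpolant T A B I ↔ IsGroundInterpolant Ts A B I := by
  unfold IsGroundInterpolant
  constructor <;> rintro ⟨hIqf, h2, h3⟩ <;> refine ⟨hIqf, ?_, ?_⟩
  · exact (models_union_singleton_congr h hA (isQF_onSentence _ hIqf)).1 h2
  · exact (not_iff_not.2 (sat_union_pair_congr h hB (isQF_onSentence _ hIqf))).1 h3
  · exact (models_union_singleton_congr h hA (isQF_onSentence _ hIqf)).2 h2
  · exact (not_iff_not.2 (sat_union_pair_congr h hB (isQF_onSentence _ hIqf))).2 h3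

theorem groundInterpolation_congr {T Ts : L.Theory} (h : CoTheories T Ts) :
    GroundInterpolation T ↔ GroundInterpolation Ts := by
  constructor <;> intro hgi nc na nb A B hA hB hun
  · obtain ⟨I, hI⟩ := hgi nc na nb A B hA hB ((jointlyUnsat_congr h hA hB).2 hun)
    exact ⟨I, (isGroundInterpolant_congr h hA hB).1 hI⟩
  · obtain ⟨I, hI⟩ := hgi nc na nb A B hA hB ((jointlyUnsat_congr h hA hB).1 hun)
    exact ⟨I, (isGroundInterpolant_congr h hA hB).2 hI⟩

end Aux
end PaperFOL

/-- a universal theory `T` with a model companion `T*` has ground interpolation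
iff `T*` has ground interpolation. -/
theorem statement_8 {L : FirstOrder.Language.{u, v}} (T Ts : L.Theory)
    (hUniv : PaperFOL.IsUniversalTheory T)
    (hmc : PaperFOL.IsModelCompanion.{u, v, max u v} T Ts) :
    PaperFOL.GroundInterpolation T ↔ PaperFOL.GroundInterpolation Ts := by
  exact PaperFOL.Aux.groundInterpolation_congr hmc.1
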